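/- Let n ≥ 3 and let A_1, …, A_n be positive semidefinite real symmetric matrices with A_1 + ⋯ + A_n ⪯ n·I. Then −(n/(4(n−2)))·I ⪯ 𝔼̃_{i,j,k} A_i A_j A_k, where 𝔼̃ denotes the average over ordered triples of pairwise distinct indices. -/

import Mathlib

open Matrix Finset

section helpers
variable {d : ℕ}

private lemma symm_dot' {A : Matrix (Fin d) (Fin d) ℝ} (hA : A.IsHermitian)
    (a b : Fin d → ℝ) : a ⬝ᵥ A *ᵥ b = (A *ᵥ a) ⬝ᵥ b := by
  have hT : Aᵀ = A := by
    have := hA.eq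
    rwa [Matrix.conjTranspose_eq_transpose_of_trivial] at this
  rw [dotProduct_mulVec, ← mulVec_transpose, hT]

private lemma psd_cs' {A : Matrix (Fin d) (Fin d) ℝ} (hA : A.PosSemidef)
    (v w : Fin d → ℝ) :
    (v ⬝ᵥ A *ᵥ w)^2 ≤ (v ⬝ᵥ A *ᵥ v) * (w ⬝ᵥ A *ᵥ w) := by
  have key : ∀ t : ℝ, 0 ≤ (w ⬝ᵥ A *ᵥ w) * (t*t) + (2 * (v ⬝ᵥ A *ᵥ w)) * t + (v ⬝ᵥ A *ᵥ v) := by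
    intro t
    have h0 := hA.dotProduct_mulVec_nonneg (v + t • w)
    have he : (star (v + t • w)) ⬝ᵥ A *ᵥ (v + t • w)
        = (w ⬝ᵥ A *ᵥ w) * (t*t) + (2 * (v ⬝ᵥ A *ᵥ w)) * t + (v ⬝ᵥ A *ᵥ v) := by
      simp only [star_trivial, mulVec_add, mulVec_smul, dotProduct_add, add_dotProduct,
        smul_dotProduct, dotProduct_smul, smul_eq_mul]
      rw [symm_dot' hA.1 w v, dotProduct_comm (A *ᵥ w) v]
      ring
    rw [he] at h0
    exact h0
  have hd := discrim_le_zero key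
  unfold discrim at hd
  nlinarith [hd]

private lemma psd_nonneg' {A : Matrix (Fin d) (Fin d) ℝ} (hA : A.PosSemidef)
    (v : Fin d → ℝ) : 0 ≤ v ⬝ᵥ A *ᵥ v := by
  have := hA.dotProduct_mulVec_nonneg v
  simpa using this

private lemma sum_mulVec' {ι : Type*} (t : Finset ι) (M : ι → Matrix (Fin d) (Fin d) ℝ)
    (v : Fin d → ℝ) :
    (∑ i ∈ t, M i) *ᵥ v = ∑ i ∈ t, (M i *ᵥ v) := by
  ext j
  simp [Matrix.mulVec, dotProduct, Matrix.sum_apply, Finset.sum_apply, Finset.sum_mul]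
  rw [Finset.sum_comm]

private lemma mulVec_sum' {ι : Type*} (t : Finset ι) (M : Matrix (Fin d) (Fin d) ℝ)
    (v : ι → Fin d → ℝ) :
    M *ᵥ (∑ i ∈ t, v i) = ∑ i ∈ t, (M *ᵥ v i) := by
  ext j
  simp [Matrix.mulVec, dotProduct, Finset.sum_apply, Finset.mul_sum]
  rw [Finset.sum_comm]

private lemma dotProduct_sum' {ι : Type*} (t : Finset ι) (v : Fin d → ℝ) (w : ι → Fin d → ℝ) :
    v ⬝ᵥ (∑ i ∈ t, w i) = ∑ i ∈ t, v ⬝ᵥ w i := by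
  simp [dotProduct, Finset.mul_sum, Finset.sum_apply]
  rw [Finset.sum_comm]

private lemma sum_dotProduct' {ι : Type*} (t : Finset ι) (v : Fin d → ℝ) (w : ι → Fin d → ℝ) :
    (∑ i ∈ t, w i) ⬝ᵥ v = ∑ i ∈ t, w i ⬝ᵥ v := by
  simp [dotProduct, Finset.sum_mul, Finset.sum_apply]
  rw [Finset.sum_comm]

private lemma tangent {a W dd lam : ℝ} (ha : 0 ≤ a) (hW : 0 ≤ W) (h : dd^2 ≤ a*W) :
    2*lam*dd - lam^2*a ≤ W := by
  rcases eq_or_lt_of_le ha with h0 | h0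
  · have hdd : dd = 0 := by nlinarith
    rw [hdd, ← h0]
    simpa using hW
  · nlinarith [sq_nonneg (dd - lam*a)]

private lemma triple_split {n : ℕ} (F : Fin n → Fin n → Fin n → ℝ) :
    (∑ t ∈ Finset.univ.filter
        (fun t : Fin n × Fin n × Fin n => t.1 ≠ t.2.1 ∧ t.1 ≠ t.2.2 ∧ t.2.1 ≠ t.2.2),
      F t.1 t.2.1 t.2.2)
    = (∑ i, ∑ j, ∑ k, F i j k) - (∑ i, ∑ k, F i i k) - (∑ i, ∑ j, F i j i)
      - (∑ i, ∑ j, F i j j) + 2 * ∑ i, F i i i := by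
  rw [Finset.sum_filter]
  rw [Fintype.sum_prod_type]
  simp only [Fintype.sum_prod_type]
  have hpt : ∀ i j k : Fin n,
      (if (i ≠ j ∧ i ≠ k ∧ j ≠ k) then F i j k else 0)
      = F i j k - (if i = j then F i j k else 0) - (if i = k then F i j k else 0)
        - (if j = k then F i j k else 0)
        + 2 * (if i = j then (if j = k then F i j k else 0) else 0) := by
    intro i j k
    by_cases h1 : i = j <;> by_cases h2 : i = k <;> by_cases h3 : j = k <;>
      simp_all <;> ring
  simp only [hpt]
  have hpull : ∀ (c : Prop) (inst : Decidable c) (g : Fin n → ℝ),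
      (∑ k, if c then g k else 0) = if c then ∑ k, g k else 0 := by
    intro c inst g; split <;> simp
  simp only [Finset.sum_add_distrib, Finset.sum_sub_distrib, hpull, ← Finset.mul_sum,
    Finset.sum_ite_eq, Finset.mem_univ, if_true]

private lemma endgame {nr V sig s2 X : ℝ} (hn3 : 3 ≤ nr)
    (hmaster : ∀ lam : ℝ, 2*lam*(s2 - (nr/2)*sig) - 2*lam^2*sig - (nr^2/4)*sig ≤ V)
    (hsig0 : 0 ≤ sig) (hX0 : 0 ≤ X) (hCS : sig^2 ≤ X * s2) (hsn : sig ≤ nr * X) :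
    -(nr^2 * (nr-1) / 4) * X ≤ V := by
  by_cases hcase : sig ≤ (nr-1)*X
  · have h0 := hmaster 0
    nlinarith [h0, hcase, hn3, hsig0, hX0, sq_nonneg nr]
  · push_neg at hcase
    have hXpos : 0 < X := by
      rcases lt_or_eq_of_le hX0 with h | h
      · exact h
      · exfalso
        have : sig ≤ 0 := by nlinarith [hCS]
        nlinarith [hcase, hn3]
    have hsigpos : 0 < sig := by nlinarith [hcase, hn3, hXpos]
    set M : ℝ := s2 - (nr/2)*sig with hM
    have hm := hmaster (M / (2*sig))
    have hlam : 2*(M/(2*sig))*M - 2*(M/(2*sig))^2*sig = M^2/(2*sig) := by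
      field_simp
      ring
    rw [hlam] at hm
    have h2XM : sig*(2*sig - nr*X) ≤ 2*X*M := by
      rw [hM]
      nlinarith [hCS]
    have h2s : 0 ≤ 2*sig - nr*X := by
      nlinarith [hcase, mul_nonneg (show (0:ℝ) ≤ nr-2 by linarith) hX0]
    have hfact : 0 ≤ sig*(2*sig - nr*X) := mul_nonneg hsig0 h2s
    have h4 : (sig*(2*sig - nr*X))^2 ≤ 4*X^2*M^2 := by nlinarith [h2XM, hfact, hXpos]
    have hpoly : 2*nr^2*X^2*(sig - (nr-1)*X) ≤ sig*(2*sig - nr*X)^2 := by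
      obtain ⟨u, hu⟩ : ∃ u, u = sig - (nr-1)*X := ⟨_, rfl⟩
      obtain ⟨mm, hmm⟩ : ∃ mm, mm = nr - 3 := ⟨_, rfl⟩
      have hu0 : 0 < u := by rw [hu]; linarith [hcase]
      have hu1 : u ≤ X := by rw [hu]; linarith [hsn]
      have hmm0 : 0 ≤ mm := by rw [hmm]; linarith [hn3]
      have hid : sig*(2*sig - nr*X)^2 - 2*nr^2*X^2*(sig - (nr-1)*X)
          = X*(2*(X - (9/4)*u)^2 + (15/8)*u^2)
            + mm*X^2*(5*X + 2*u) + mm^2*X^2*(4*X + 3*u)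
            + mm^3*X^3 + 8*u^2*mm*X + 4*u^3 := by
        rw [hu, hmm]; ring
      have t1 : 0 ≤ X*(2*(X - (9/4)*u)^2 + (15/8)*u^2) := by positivity
      have t2 : 0 ≤ mm*X^2*(5*X + 2*u) := by
        have : (0:ℝ) ≤ 5*X + 2*u := by linarith
        exact mul_nonneg (mul_nonneg hmm0 (sq_nonneg X)) this
      have t3 : 0 ≤ mm^2*X^2*(4*X + 3*u) := by
        have : (0:ℝ) ≤ 4*X + 3*u := by linarith
        exact mul_nonneg (mul_nonneg (sq_nonneg mm) (sq_nonneg X)) this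
      have t4 : 0 ≤ mm^3*X^3 :=
        mul_nonneg (pow_nonneg hmm0 3) (pow_nonneg hXpos.le 3)
      have t5 : 0 ≤ 8*u^2*mm*X :=
        mul_nonneg (mul_nonneg (by positivity) hmm0) hXpos.le
      have t6 : 0 ≤ 4*u^3 := by positivity
      linarith [hid, t1, t2, t3, t4, t5, t6]
    have hfinal : ((nr^2/4)*sig - (nr^2*(nr-1)/4)*X) * (2*sig) ≤ M^2 := by
      have hmul := mul_le_mul_of_nonneg_right hpoly (le_of_lt hsigpos)
      have hsq : sig*(2*sig - nr*X)^2 * sig = (sig*(2*sig - nr*X))^2 := by ring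
      rw [hsq] at hmul
      have h5 : 2*nr^2*X^2*(sig - (nr-1)*X) * sig ≤ 4*X^2*M^2 := le_trans hmul h4
      have hX2pos : (0:ℝ) < 4*X^2 := by positivity
      have h7 : (((nr^2/4)*sig - (nr^2*(nr-1)/4)*X) * (2*sig)) * (4*X^2) ≤ M^2 * (4*X^2) := by
        calc (((nr^2/4)*sig - (nr^2*(nr-1)/4)*X) * (2*sig)) * (4*X^2)
            = 2*nr^2*X^2*(sig - (nr-1)*X) * sig := by ring
          _ ≤ 4*X^2*M^2 := h5
          _ = M^2 * (4*X^2) := by ring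
      exact le_of_mul_le_mul_right h7 hX2pos
    have hdiv : (nr^2/4)*sig - (nr^2*(nr-1)/4)*X ≤ M^2/(2*sig) := by
      rw [le_div_iff₀ (by positivity)]
      exact hfinal
    linarith [hm, hdiv]

end helpers

section main
variable {d n : ℕ}

private lemma key_ineq (hn : 3 ≤ n) (A : Fin n → Matrix (Fin d) (Fin d) ℝ)
    (hA : ∀ i, (A i).PosSemidef)
    (hsum : ((n : ℝ) • (1 : Matrix (Fin d) (Fin d) ℝ) - ∑ i, A i).PosSemidef)
    (x : Fin d → ℝ) :
    -((n:ℝ)^2 * ((n:ℝ)-1) / 4) * (x ⬝ᵥ x)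
      ≤ x ⬝ᵥ (∑ t ∈ Finset.univ.filter
          (fun t : Fin n × Fin n × Fin n =>
            t.1 ≠ t.2.1 ∧ t.1 ≠ t.2.2 ∧ t.2.1 ≠ t.2.2),
          A t.1 * A t.2.1 * A t.2.2) *ᵥ x := by
  have hn3 : (3:ℝ) ≤ (n:ℝ) := by exact_mod_cast hn
  classical
  set z : Fin n → Fin d → ℝ := fun i => A i *ᵥ x with hz
  have hzi : ∀ i : Fin n, A i *ᵥ x = z i := fun i => by simp only [hz]
  set s : Fin d → ℝ := ∑ i, z i with hs
  have dotA : ∀ (i : Fin n) (v : Fin d → ℝ), x ⬝ᵥ (A i *ᵥ v) = z i ⬝ᵥ v := by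
    intro i v
    rw [symm_dot' (hA i).1, hzi]
  set V : ℝ := x ⬝ᵥ (∑ t ∈ Finset.univ.filter
          (fun t : Fin n × Fin n × Fin n =>
            t.1 ≠ t.2.1 ∧ t.1 ≠ t.2.2 ∧ t.2.1 ≠ t.2.2),
          A t.1 * A t.2.1 * A t.2.2) *ᵥ x with hV
  set al : ℝ := ∑ j, s ⬝ᵥ (A j *ᵥ s) with hal
  set be : ℝ := ∑ i, z i ⬝ᵥ (A i *ᵥ s) with hbe
  set be2 : ℝ := ∑ j, s ⬝ᵥ (A j *ᵥ z j) with hbe2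
  set ga : ℝ := ∑ i, ∑ j, z i ⬝ᵥ (A j *ᵥ z i) with hga
  set de : ℝ := ∑ i, z i ⬝ᵥ (A i *ᵥ z i) with hde
  set q : ℝ := ∑ i, z i ⬝ᵥ z i with hq
  set sig : ℝ := ∑ i, x ⬝ᵥ z i with hsig
  set s2 : ℝ := s ⬝ᵥ s with hs2
  set X : ℝ := x ⬝ᵥ x with hX
  -- express V via atoms
  have hVsum : V = al - be - ga - be2 + 2 * de := by
    rw [hV, sum_mulVec', dotProduct_sum']
    have hF : ∀ t : Fin n × Fin n × Fin n,
        x ⬝ᵥ ((A t.1 * A t.2.1 * A t.2.2) *ᵥ x) = z t.1 ⬝ᵥ (A t.2.1 *ᵥ z t.2.2) := by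
      intro t
      rw [← Matrix.mulVec_mulVec, ← Matrix.mulVec_mulVec, hzi, dotA]
    simp only [hF]
    rw [triple_split (fun i j k => z i ⬝ᵥ (A j *ᵥ z k))]
    have e1 : (∑ i, ∑ j, ∑ k, z i ⬝ᵥ (A j *ᵥ z k)) = al := by
      rw [hal]
      have h1 : ∀ j : Fin n, s ⬝ᵥ (A j *ᵥ s) = ∑ i, ∑ k, z i ⬝ᵥ (A j *ᵥ z k) := by
        intro j
        rw [hs, sum_dotProduct']
        refine Finset.sum_congr rfl fun i _ => ?_
        rw [mulVec_sum', dotProduct_sum']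
      simp only [h1]
      rw [Finset.sum_comm]
    have e2 : (∑ i, ∑ k, z i ⬝ᵥ (A i *ᵥ z k)) = be := by
      rw [hbe]
      refine Finset.sum_congr rfl fun i _ => ?_
      rw [hs, mulVec_sum', dotProduct_sum']
    have e4 : (∑ i, ∑ j, z i ⬝ᵥ (A j *ᵥ z j)) = be2 := by
      rw [hbe2]
      have h1 : ∀ j : Fin n, s ⬝ᵥ (A j *ᵥ z j) = ∑ i, z i ⬝ᵥ (A j *ᵥ z j) := by
        intro j
        rw [hs, sum_dotProduct']
      simp only [h1]
      rw [Finset.sum_comm]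
    rw [e1, e2, e4, ← hga, ← hde]
  -- sums of the three families
  have hWsum : ∑ i, ((s - z i) ⬝ᵥ (A i *ᵥ (s - z i))) = al - be2 - be + de := by
    have hWi : ∀ i : Fin n, (s - z i) ⬝ᵥ (A i *ᵥ (s - z i))
        = s ⬝ᵥ (A i *ᵥ s) - s ⬝ᵥ (A i *ᵥ z i) - (z i ⬝ᵥ (A i *ᵥ s) - z i ⬝ᵥ (A i *ᵥ z i)) := by
      intro i
      rw [mulVec_sub, sub_dotProduct, dotProduct_sub, dotProduct_sub]
    simp only [hWi]
    rw [Finset.sum_sub_distrib, Finset.sum_sub_distrib, Finset.sum_sub_distrib]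
    rw [← hal, ← hbe2, ← hbe, ← hde]
    ring
  have hS1sum : ∑ i, (z i ⬝ᵥ (((n : ℝ) • (1 : Matrix (Fin d) (Fin d) ℝ) - ∑ j, A j) *ᵥ z i))
      = (n:ℝ) * q - ga := by
    have hSi : ∀ i : Fin n, z i ⬝ᵥ (((n : ℝ) • (1 : Matrix (Fin d) (Fin d) ℝ) - ∑ j, A j) *ᵥ z i)
        = (n:ℝ) * (z i ⬝ᵥ z i) - ∑ j, z i ⬝ᵥ (A j *ᵥ z i) := by
      intro i
      rw [sub_mulVec, dotProduct_sub, smul_mulVec, one_mulVec, dotProduct_smul,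
        smul_eq_mul, sum_mulVec', dotProduct_sum']
    simp only [hSi]
    rw [Finset.sum_sub_distrib, ← Finset.mul_sum, ← hq, ← hga]
  have hYsum : ∑ i, ((z i - ((n:ℝ)/2) • x) ⬝ᵥ (A i *ᵥ (z i - ((n:ℝ)/2) • x)))
      = de - (n:ℝ) * q + ((n:ℝ)^2/4) * sig := by
    have hYi : ∀ i : Fin n, (z i - ((n:ℝ)/2) • x) ⬝ᵥ (A i *ᵥ (z i - ((n:ℝ)/2) • x))
        = z i ⬝ᵥ (A i *ᵥ z i) - (n:ℝ) * (z i ⬝ᵥ z i) + ((n:ℝ)^2/4) * (x ⬝ᵥ z i) := by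
      intro i
      rw [mulVec_sub, sub_dotProduct, dotProduct_sub, dotProduct_sub, mulVec_smul,
        dotProduct_smul, dotProduct_smul, smul_dotProduct, smul_dotProduct]
      rw [hzi, dotA i (z i), dotA i x]
      simp only [smul_eq_mul]
      rw [dotProduct_comm (z i) x]
      ring
    simp only [hYi]
    rw [Finset.sum_add_distrib, Finset.sum_sub_distrib, ← Finset.mul_sum, ← Finset.mul_sum,
      ← hde, ← hq, ← hsig]
  have hz2s : ∑ i, z i ⬝ᵥ s = s2 := by
    rw [hs2, hs, sum_dotProduct']
  -- master lower bound
  have hmaster : ∀ lam : ℝ,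
      2*lam*(s2 - ((n:ℝ)/2)*sig) - 2*lam^2*sig - ((n:ℝ)^2/4)*sig ≤ V := by
    intro lam
    have hW : ∀ i : Fin n, 2*lam*(z i ⬝ᵥ s - z i ⬝ᵥ z i) - lam^2*(x ⬝ᵥ z i)
        ≤ (s - z i) ⬝ᵥ (A i *ᵥ (s - z i)) := by
      intro i
      have hcs := psd_cs' (hA i) x (s - z i)
      have hax : x ⬝ᵥ (A i *ᵥ x) = x ⬝ᵥ z i := by rw [hzi]
      have hd : x ⬝ᵥ (A i *ᵥ (s - z i)) = z i ⬝ᵥ s - z i ⬝ᵥ z i := by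
        rw [dotA, dotProduct_sub]
      rw [hax, hd] at hcs
      exact tangent (by rw [← hax]; exact psd_nonneg' (hA i) x)
        (psd_nonneg' (hA i) (s - z i)) hcs
    have hY : ∀ i : Fin n, 2*lam*(z i ⬝ᵥ z i - ((n:ℝ)/2)*(x ⬝ᵥ z i)) - lam^2*(x ⬝ᵥ z i)
        ≤ (z i - ((n:ℝ)/2) • x) ⬝ᵥ (A i *ᵥ (z i - ((n:ℝ)/2) • x)) := by
      intro i
      have hcs := psd_cs' (hA i) x (z i - ((n:ℝ)/2) • x)
      have hax : x ⬝ᵥ (A i *ᵥ x) = x ⬝ᵥ z i := by rw [hzi]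
      have hd : x ⬝ᵥ (A i *ᵥ (z i - ((n:ℝ)/2) • x)) = z i ⬝ᵥ z i - ((n:ℝ)/2)*(x ⬝ᵥ z i) := by
        rw [dotA, dotProduct_sub, dotProduct_smul, smul_eq_mul, dotProduct_comm (z i) x]
      rw [hax, hd] at hcs
      exact tangent (by rw [← hax]; exact psd_nonneg' (hA i) x)
        (psd_nonneg' (hA i) _) hcs
    have hS1 : ∀ i : Fin n,
        0 ≤ z i ⬝ᵥ (((n : ℝ) • (1 : Matrix (Fin d) (Fin d) ℝ) - ∑ j, A j) *ᵥ z i) :=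
      fun i => psd_nonneg' hsum (z i)
    have hle1 : ∑ i, (2*lam*(z i ⬝ᵥ s - z i ⬝ᵥ z i) - lam^2*(x ⬝ᵥ z i))
        ≤ al - be2 - be + de := by
      rw [← hWsum]; exact Finset.sum_le_sum (fun i _ => hW i)
    have hle2 : ∑ i, (2*lam*(z i ⬝ᵥ z i - ((n:ℝ)/2)*(x ⬝ᵥ z i)) - lam^2*(x ⬝ᵥ z i))
        ≤ de - (n:ℝ) * q + ((n:ℝ)^2/4) * sig := by
      rw [← hYsum]; exact Finset.sum_le_sum (fun i _ => hY i)
    have hle3 : (0:ℝ) ≤ (n:ℝ) * q - ga := by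
      rw [← hS1sum]; exact Finset.sum_nonneg (fun i _ => hS1 i)
    have heq1 : ∑ i, (2*lam*(z i ⬝ᵥ s - z i ⬝ᵥ z i) - lam^2*(x ⬝ᵥ z i))
        = 2*lam*(s2 - q) - lam^2*sig := by
      have h1 : ∀ i : Fin n, 2*lam*(z i ⬝ᵥ s - z i ⬝ᵥ z i) - lam^2*(x ⬝ᵥ z i)
          = 2*lam*(z i ⬝ᵥ s) - 2*lam*(z i ⬝ᵥ z i) - lam^2*(x ⬝ᵥ z i) := fun i => by ring
      simp only [h1]
      rw [Finset.sum_sub_distrib, Finset.sum_sub_distrib, ← Finset.mul_sum, ← Finset.mul_sum,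
        ← Finset.mul_sum, hz2s, ← hq, ← hsig]
      ring
    have heq2 : ∑ i, (2*lam*(z i ⬝ᵥ z i - ((n:ℝ)/2)*(x ⬝ᵥ z i)) - lam^2*(x ⬝ᵥ z i))
        = 2*lam*(q - ((n:ℝ)/2)*sig) - lam^2*sig := by
      have h1 : ∀ i : Fin n, 2*lam*(z i ⬝ᵥ z i - ((n:ℝ)/2)*(x ⬝ᵥ z i)) - lam^2*(x ⬝ᵥ z i)
          = 2*lam*(z i ⬝ᵥ z i) - (n:ℝ)*lam*(x ⬝ᵥ z i) - lam^2*(x ⬝ᵥ z i) := fun i => by ring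
      simp only [h1]
      rw [Finset.sum_sub_distrib, Finset.sum_sub_distrib, ← Finset.mul_sum, ← Finset.mul_sum,
        ← Finset.mul_sum, ← hq, ← hsig]
      ring
    rw [heq1] at hle1
    rw [heq2] at hle2
    rw [hVsum]
    linarith
  -- scalar facts
  have hai : ∀ i : Fin n, 0 ≤ x ⬝ᵥ z i := by
    intro i
    have h0 := psd_nonneg' (hA i) x
    rwa [hzi] at h0
  have hsig0 : 0 ≤ sig := by
    rw [hsig]; exact Finset.sum_nonneg (fun i _ => hai i)
  have hX0 : 0 ≤ X := by
    have h0 := psd_nonneg' (Matrix.PosSemidef.one (n := Fin d) (R := ℝ)) x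
    rwa [one_mulVec, ← hX] at h0
  have hCS : sig^2 ≤ X * s2 := by
    have h1 := psd_cs' (Matrix.PosSemidef.one (n := Fin d) (R := ℝ)) x s
    have hxs : x ⬝ᵥ s = sig := by rw [hs, dotProduct_sum', hsig]
    rw [one_mulVec, one_mulVec, hxs, ← hX, ← hs2] at h1
    exact h1
  have hsn : sig ≤ (n:ℝ) * X := by
    have h0 := psd_nonneg' hsum x
    have he : x ⬝ᵥ (((n : ℝ) • (1 : Matrix (Fin d) (Fin d) ℝ) - ∑ j, A j) *ᵥ x)
        = (n:ℝ)*X - sig := by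
      rw [sub_mulVec, dotProduct_sub, smul_mulVec, one_mulVec, dotProduct_smul,
        smul_eq_mul, sum_mulVec', dotProduct_sum', ← hX]
    rw [he] at h0
    linarith
  exact endgame hn3 hmaster hsig0 hX0 hCS hsn

end main

theorem stmt14 {d n : ℕ} (hn : 3 ≤ n) (A : Fin n → Matrix (Fin d) (Fin d) ℝ)
    (hA : ∀ i, (A i).PosSemidef)
    (hsum : ((n : ℝ) • (1 : Matrix (Fin d) (Fin d) ℝ) - ∑ i, A i).PosSemidef) :
    (((1 : ℝ) / ((n : ℝ) * ((n : ℝ) - 1) * ((n : ℝ) - 2))) •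
        (∑ t ∈ Finset.univ.filter
          (fun t : Fin n × Fin n × Fin n =>
            t.1 ≠ t.2.1 ∧ t.1 ≠ t.2.2 ∧ t.2.1 ≠ t.2.2),
          A t.1 * A t.2.1 * A t.2.2) -
      (-((n : ℝ) / (4 * ((n : ℝ) - 2)))) •
        (1 : Matrix (Fin d) (Fin d) ℝ)).PosSemidef := by
  classical
  have hn3 : (3:ℝ) ≤ (n:ℝ) := by exact_mod_cast hn
  set T : Matrix (Fin d) (Fin d) ℝ := ∑ t ∈ Finset.univ.filter
          (fun t : Fin n × Fin n × Fin n =>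
            t.1 ≠ t.2.1 ∧ t.1 ≠ t.2.2 ∧ t.2.1 ≠ t.2.2),
          A t.1 * A t.2.1 * A t.2.2 with hTdef
  have hT : T.IsHermitian := by
    unfold Matrix.IsHermitian
    rw [hTdef, Matrix.conjTranspose_sum]
    have h1 : ∀ t ∈ Finset.univ.filter
          (fun t : Fin n × Fin n × Fin n =>
            t.1 ≠ t.2.1 ∧ t.1 ≠ t.2.2 ∧ t.2.1 ≠ t.2.2),
        (A t.1 * A t.2.1 * A t.2.2)ᴴ = A t.2.2 * A t.2.1 * A t.1 := by
      intro t _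
      rw [Matrix.conjTranspose_mul, Matrix.conjTranspose_mul, (hA t.1).1.eq,
        (hA t.2.1).1.eq, (hA t.2.2).1.eq, mul_assoc]
    rw [Finset.sum_congr rfl h1]
    refine Finset.sum_nbij' (fun t => (t.2.2, t.2.1, t.1)) (fun t => (t.2.2, t.2.1, t.1))
      ?_ ?_ ?_ ?_ ?_
    · intro a ha
      simp only [Finset.mem_filter, Finset.mem_univ, true_and] at ha ⊢
      exact ⟨ha.2.2.symm, ha.2.1.symm, ha.1.symm⟩
    · intro a ha
      simp only [Finset.mem_filter, Finset.mem_univ, true_and] at ha ⊢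
      exact ⟨ha.2.2.symm, ha.2.1.symm, ha.1.symm⟩
    · intro a _; rfl
    · intro a _; rfl
    · intro a _; rfl
  refine Matrix.PosSemidef.of_dotProduct_mulVec_nonneg ?_ ?_
  · refine Matrix.IsHermitian.sub ?_ ?_
    · show _ = _
      rw [Matrix.conjTranspose_smul, hT.eq, star_trivial]
    · show _ = _
      rw [Matrix.conjTranspose_smul, Matrix.conjTranspose_one, star_trivial]
  · intro y
    have hkey := key_ineq hn A hA hsum y
    rw [← hTdef] at hkey
    have hexp : star y ⬝ᵥ ((((1 : ℝ) / ((n : ℝ) * ((n : ℝ) - 1) * ((n : ℝ) - 2))) • T -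
        (-((n : ℝ) / (4 * ((n : ℝ) - 2)))) • (1 : Matrix (Fin d) (Fin d) ℝ)) *ᵥ y)
        = ((1 : ℝ) / ((n : ℝ) * ((n : ℝ) - 1) * ((n : ℝ) - 2))) * (y ⬝ᵥ T *ᵥ y)
          + ((n : ℝ) / (4 * ((n : ℝ) - 2))) * (y ⬝ᵥ y) := by
      rw [star_trivial, Matrix.sub_mulVec, dotProduct_sub, Matrix.smul_mulVec,
        Matrix.smul_mulVec, Matrix.one_mulVec, dotProduct_smul, dotProduct_smul,
        smul_eq_mul, smul_eq_mul]
      ring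
    rw [hexp]
    have hY0 : 0 ≤ y ⬝ᵥ y := by
      have h0 := psd_nonneg' (Matrix.PosSemidef.one (n := Fin d) (R := ℝ)) y
      rwa [Matrix.one_mulVec] at h0
    have hc : 0 < (n : ℝ) * ((n : ℝ) - 1) * ((n : ℝ) - 2) := by nlinarith [hn3]
    have hcpos : 0 < (1 : ℝ) / ((n : ℝ) * ((n : ℝ) - 1) * ((n : ℝ) - 2)) := by positivity
    have hconst : ((1 : ℝ) / ((n : ℝ) * ((n : ℝ) - 1) * ((n : ℝ) - 2)))
        * ((n:ℝ)^2 * ((n:ℝ)-1) / 4) = (n : ℝ) / (4 * ((n : ℝ) - 2)) := by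
      have h1 : (n:ℝ) ≠ 0 := by linarith
      have h2 : (n:ℝ) - 1 ≠ 0 := by linarith
      have h3 : (n:ℝ) - 2 ≠ 0 := by linarith
      field_simp
    have hmul := mul_le_mul_of_nonneg_left hkey (le_of_lt hcpos)
    nlinarith [hmul, hconst, hY0]
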